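/- Let N ≥ 1, γₙ, βₙ, εₙ > 0 for all n, and consider maximizing C(α) = Σₙ γₙ log₂(1 + βₙαₙ/(αₙ+εₙ)) over α ≥ 0 with Σₙαₙ = 1. Then α* defined by αₙ* = max(0, (-(2+βₙ)εₙ + √(βₙ²εₙ² + 4ν γₙβₙ(1+βₙ)εₙ))/(2(1+βₙ))), where ν > 0 is chosen so that Σₙαₙ* = 1, is a global maximizer of this problem. -/
import Mathlib

/-- Per-coordinate gradient inequality for the KKT point. -/
lemma stmt_19_aux (γ β ε ν x y : ℝ) (hγ : 0 < γ) (hβ : 0 < β) (hε : 0 < ε)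
    (hν : 0 < ν)
    (hx : x = max 0
      ((-(2 + β) * ε + Real.sqrt (β ^ 2 * ε ^ 2 + 4 * ν * γ * β * (1 + β) * ε)) /
        (2 * (1 + β))))
    (hy : 0 ≤ y) :
    γ * Real.logb 2 (1 + β * y / (y + ε)) ≤
      γ * Real.logb 2 (1 + β * x / (x + ε)) + (y - x) / (ν * Real.log 2) := by
  have hβ1 : 0 < 1 + β := by linarith
  set D : ℝ := β ^ 2 * ε ^ 2 + 4 * ν * γ * β * (1 + β) * ε with hD
  have hD0 : 0 ≤ D := by positivity
  have hsq : Real.sqrt D ^ 2 = D := Real.sq_sqrt hD0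
  have hsqrt0 : 0 ≤ Real.sqrt D := Real.sqrt_nonneg _
  have hx0 : 0 ≤ x := by rw [hx]; exact le_max_left _ _
  -- abbreviations
  have hBx : 0 < x + ε := by linarith
  have hBy : 0 < y + ε := by linarith
  have hAx : 0 < (1 + β) * x + ε := by positivity
  have hAy : 0 < (1 + β) * y + ε := by positivity
  have hL : 0 < Real.log 2 := Real.log_pos (by norm_num)
  -- main inequality on the "derivative" part
  have hmain : ν * γ * β * ε * (y - x) ≤ ((1 + β) * x + ε) * (y + ε) * (y - x) := by
    set r : ℝ := (-(2 + β) * ε + Real.sqrt D) / (2 * (1 + β)) with hr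
    rcases le_or_gt r 0 with h0 | h0
    · -- x = 0 ; slope at 0 is ≤ 1/ν : ν γ β ≤ ε
      have hx0' : x = 0 := by rw [hx]; exact max_eq_left h0
      have hnum : Real.sqrt D ≤ (2 + β) * ε := by
        have h2 : -(2 + β) * ε + Real.sqrt D ≤ 0 := by
          by_contra hcon
          push_neg at hcon
          have : 0 < r := by
            rw [hr]
            positivity
          linarith
        linarith
      have hDle : D ≤ ((2 + β) * ε) ^ 2 := by
        calc D = Real.sqrt D ^ 2 := hsq.symm
        _ ≤ ((2 + β) * ε) ^ 2 := by
          apply pow_le_pow_left₀ hsqrt0 hnum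
      have hslope : ν * γ * β ≤ ε := by nlinarith [hDle, mul_pos hβ1 hε]
      rw [hx0']
      nlinarith [mul_nonneg (mul_nonneg hε.le hy) hy]
    · -- x = r > 0 ; stationarity: ν γ β ε = ((1+β)x+ε)(x+ε)
      have hx0' : x = r := by rw [hx]; exact max_eq_right h0.le
      have hs : Real.sqrt D = 2 * (1 + β) * r + (2 + β) * ε := by
        rw [hr]
        field_simp
        ring
      have hst : ν * γ * β * ε = ((1 + β) * x + ε) * (x + ε) := by
        have h2 : D = (2 * (1 + β) * r + (2 + β) * ε) ^ 2 := by
          rw [← hsq, hs]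
        rw [hx0']
        nlinarith [h2]
      rw [hst]
      nlinarith [sq_nonneg (y - x), hAx]
  -- rewrite the logb arguments as quotients
  have e1 : 1 + β * y / (y + ε) = ((1 + β) * y + ε) / (y + ε) := by
    field_simp; ring
  have e2 : 1 + β * x / (x + ε) = ((1 + β) * x + ε) / (x + ε) := by
    field_simp; ring
  rw [e1, e2]
  -- reduce logb to log
  rw [Real.logb, Real.logb]
  have hlog : Real.log (((1 + β) * y + ε) / (y + ε)) -
      Real.log (((1 + β) * x + ε) / (x + ε)) ≤
      β * ε * (y - x) / (((1 + β) * x + ε) * (y + ε)) := by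
    have ht : 0 < ((1 + β) * y + ε) * (x + ε) / (((1 + β) * x + ε) * (y + ε)) := by
      positivity
    have h1 := Real.log_le_sub_one_of_pos ht
    have h2 : Real.log (((1 + β) * y + ε) * (x + ε) / (((1 + β) * x + ε) * (y + ε))) =
        Real.log (((1 + β) * y + ε) / (y + ε)) -
        Real.log (((1 + β) * x + ε) / (x + ε)) := by
      rw [Real.log_div (by positivity) (by positivity),
        Real.log_div (by positivity) (by positivity),
        Real.log_div (by positivity) (by positivity),
        Real.log_mul (by positivity) (by positivity),
        Real.log_mul (by positivity) (by positivity)]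
      ring
    rw [h2] at h1
    have h3 : ((1 + β) * y + ε) * (x + ε) / (((1 + β) * x + ε) * (y + ε)) - 1 =
        β * ε * (y - x) / (((1 + β) * x + ε) * (y + ε)) := by
      field_simp
      ring
    linarith [h3 ▸ h1]
  -- put everything together
  have hfin : γ * (β * ε * (y - x) / (((1 + β) * x + ε) * (y + ε))) ≤ (y - x) / ν := by
    rw [mul_div_assoc', div_le_div_iff₀ (by positivity) hν]
    have e3 : γ * (β * ε * (y - x)) * ν = ν * γ * β * ε * (y - x) := by ring
    have e4 : (y - x) * (((1 + β) * x + ε) * (y + ε)) =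
        ((1 + β) * x + ε) * (y + ε) * (y - x) := by ring
    linarith [hmain, e3, e4]
  have hg1 : γ * (Real.log (((1 + β) * y + ε) / (y + ε)) -
      Real.log (((1 + β) * x + ε) / (x + ε))) ≤ (y - x) / ν := by
    calc γ * (Real.log (((1 + β) * y + ε) / (y + ε)) -
        Real.log (((1 + β) * x + ε) / (x + ε)))
        ≤ γ * (β * ε * (y - x) / (((1 + β) * x + ε) * (y + ε))) := by
          exact mul_le_mul_of_nonneg_left hlog hγ.le
      _ ≤ (y - x) / ν := hfin
  have hdd : (y - x) / ν / Real.log 2 = (y - x) / (ν * Real.log 2) := div_div _ _ _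
  have h2 := (div_le_div_iff_of_pos_right hL).mpr hg1
  have hgoal : γ * (Real.log (((1 + β) * y + ε) / (y + ε)) / Real.log 2) -
      γ * (Real.log (((1 + β) * x + ε) / (x + ε)) / Real.log 2) =
      γ * (Real.log (((1 + β) * y + ε) / (y + ε)) -
        Real.log (((1 + β) * x + ε) / (x + ε))) / Real.log 2 := by ring
  linarith [h2, hdd ▸ h2]

theorem stmt_19 (N : ℕ) (hN : 1 ≤ N) (γ β ε : Fin N → ℝ)
    (hγ : ∀ n, 0 < γ n) (hβ : ∀ n, 0 < β n) (hε : ∀ n, 0 < ε n)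
    (ν : ℝ) (hν : 0 < ν)
    (αstar : Fin N → ℝ)
    (hαs : ∀ n, αstar n = max 0
      ((-(2 + β n) * ε n +
          Real.sqrt (β n ^ 2 * ε n ^ 2 + 4 * ν * γ n * β n * (1 + β n) * ε n)) /
        (2 * (1 + β n))))
    (hsum : ∑ n, αstar n = 1) :
    ∀ α : Fin N → ℝ, (∀ n, 0 ≤ α n) → ∑ n, α n = 1 →
      ∑ n, γ n * Real.logb 2 (1 + β n * α n / (α n + ε n)) ≤
        ∑ n, γ n * Real.logb 2 (1 + β n * αstar n / (αstar n + ε n)) := by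
  intro α hα hαsum
  have key : ∀ n, γ n * Real.logb 2 (1 + β n * α n / (α n + ε n)) ≤
      γ n * Real.logb 2 (1 + β n * αstar n / (αstar n + ε n)) +
      (α n - αstar n) / (ν * Real.log 2) := fun n =>
    stmt_19_aux (γ n) (β n) (ε n) ν (αstar n) (α n) (hγ n) (hβ n) (hε n) hν (hαs n) (hα n)
  calc ∑ n, γ n * Real.logb 2 (1 + β n * α n / (α n + ε n))
      ≤ ∑ n, (γ n * Real.logb 2 (1 + β n * αstar n / (αstar n + ε n)) +
        (α n - αstar n) / (ν * Real.log 2)) := Finset.sum_le_sum fun n _ => key n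
    _ = ∑ n, γ n * Real.logb 2 (1 + β n * αstar n / (αstar n + ε n)) +
        (∑ n, (α n - αstar n)) / (ν * Real.log 2) := by
        rw [Finset.sum_add_distrib, Finset.sum_div]
    _ = ∑ n, γ n * Real.logb 2 (1 + β n * αstar n / (αstar n + ε n)) := by
        rw [Finset.sum_sub_distrib, hαsum, hsum]
        simp
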